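/- For fixed symmetric matrix A ∈ Sym(d) and rotation-invariant constraint set C = {Q ∈ Sym(d) : F(Q) = 0} where F depends only on the eigenvalues of Q, the minimization min_{Q ∈ C} |A − Q|² (Frobenius norm) admits a minimizer Q* that is simultaneously diagonalizable with A, i.e., Q* = U diag(μ) Uᵀ where A = U diag(λ) Uᵀ, and the problem reduces to min over eigenvalue vectors μ with F(diag(μ)) = 0 of Σᵢ (λᵢ − μᵢ)², provided C is nonempty and closed. -/

import Mathlib

open Matrix
/-- Squared Frobenius norm. -/
noncomputable def frobSq {d : ℕ} (M : Matrix (Fin d) (Fin d) ℝ) : ℝ :=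
  ∑ i, ∑ j, (M i j) ^ 2

section Aux

variable {d : ℕ}

lemma exists_spectral (Q : Matrix (Fin d) (Fin d) ℝ) (hQ : Q.IsSymm) :
    ∃ (V : Matrix (Fin d) (Fin d) ℝ) (ν : Fin d → ℝ),
      V * Vᵀ = 1 ∧ Q = V * Matrix.diagonal ν * Vᵀ := by
  have hH : Q.IsHermitian := by
    rw [Matrix.IsHermitian, conjTranspose_eq_transpose_of_trivial]; exact hQ
  refine ⟨hH.eigenvectorUnitary, hH.eigenvalues, ?_, ?_⟩
  · have := (Matrix.mem_unitaryGroup_iff).mp hH.eigenvectorUnitary.2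
    rwa [Matrix.star_eq_conjTranspose, conjTranspose_eq_transpose_of_trivial] at this
  · have := hH.spectral_theorem
    simpa [Matrix.star_eq_conjTranspose, conjTranspose_eq_transpose_of_trivial,
      Function.comp] using this

lemma frobSq_eq_trace (M : Matrix (Fin d) (Fin d) ℝ) :
    frobSq M = trace (M * Mᵀ) := by
  simp [frobSq, trace, mul_apply, diag, sq]

lemma frobSq_conj (U M : Matrix (Fin d) (Fin d) ℝ) (hU : U * Uᵀ = 1) :
    frobSq (U * M * Uᵀ) = frobSq M := by
  have hU' : Uᵀ * U = 1 := mul_eq_one_comm.mp hU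
  rw [frobSq_eq_trace, frobSq_eq_trace]
  rw [show (U * M * Uᵀ) * (U * M * Uᵀ)ᵀ = U * (M * Mᵀ) * Uᵀ by
    simp only [transpose_mul, transpose_transpose]
    rw [Matrix.mul_assoc, Matrix.mul_assoc, ← Matrix.mul_assoc Uᵀ U, hU', Matrix.one_mul,
      Matrix.mul_assoc, Matrix.mul_assoc]]
  rw [trace_mul_comm, ← Matrix.mul_assoc, ← Matrix.mul_assoc, hU', Matrix.one_mul]

lemma frobSq_diagonal (v : Fin d → ℝ) :
    frobSq (Matrix.diagonal v) = ∑ i, (v i) ^ 2 := by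
  simp [frobSq, Matrix.diagonal, Matrix.of_apply, ite_pow]

lemma frobSq_sub_expand (A Q : Matrix (Fin d) (Fin d) ℝ) (hQ : Q.IsSymm) :
    frobSq (A - Q) = frobSq A + frobSq Q - 2 * trace (A * Q) := by
  have h1 : trace (A * Q) = ∑ i, ∑ j, A i j * Q i j := by
    nth_rewrite 1 [← hQ]
    rw [trace]
    simp only [diag_apply, mul_apply, transpose_apply]
  rw [h1, frobSq, frobSq, frobSq]
  have : ∀ i j, (A - Q) i j ^ 2 = A i j ^ 2 + Q i j ^ 2 - 2 * (A i j * Q i j) := by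
    intro i j; simp [Matrix.sub_apply]; ring
  simp only [this, Finset.sum_sub_distrib, Finset.sum_add_distrib, ← Finset.mul_sum]

lemma permMatrix_apply' (σ : Equiv.Perm (Fin d)) (i j : Fin d) :
    σ.permMatrix ℝ i j = if σ i = j then 1 else 0 := by
  simp [Equiv.Perm.permMatrix, PEquiv.toMatrix_apply, Equiv.toPEquiv_apply, eq_comm]

lemma permMatrix_conj_apply (M : Matrix (Fin d) (Fin d) ℝ)
    (σ : Equiv.Perm (Fin d)) (i j : Fin d) :
    (σ.permMatrix ℝ * M * (σ.permMatrix ℝ)ᵀ) i j = M (σ i) (σ j) := by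
  simp [mul_apply, transpose_apply, permMatrix_apply', Equiv.toPEquiv_apply,
    Option.some.injEq, ite_mul, mul_ite, Finset.sum_ite_eq, Finset.sum_ite_eq',
    Equiv.symm_apply_eq]

lemma permMatrix_orth (σ : Equiv.Perm (Fin d)) :
    σ.permMatrix ℝ * (σ.permMatrix ℝ)ᵀ = 1 := by
  have : σ.permMatrix ℝ * 1 * (σ.permMatrix ℝ)ᵀ = 1 := by
    ext i j
    rw [permMatrix_conj_apply]
    simp [one_apply, σ.injective.eq_iff]
  rwa [Matrix.mul_one] at this

lemma diagonal_perm (ν : Fin d → ℝ) (σ : Equiv.Perm (Fin d)) :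
    Matrix.diagonal (ν ∘ σ) =
      σ.permMatrix ℝ * Matrix.diagonal ν * (σ.permMatrix ℝ)ᵀ := by
  ext i j
  rw [permMatrix_conj_apply]
  simp [diagonal_apply, σ.injective.eq_iff]

lemma trace_bound (lam ν : Fin d → ℝ) (U V : Matrix (Fin d) (Fin d) ℝ)
    (hU : U * Uᵀ = 1) (hV : V * Vᵀ = 1) :
    ∃ σ : Equiv.Perm (Fin d),
      trace (U * Matrix.diagonal lam * Uᵀ * (V * Matrix.diagonal ν * Vᵀ)) ≤
        ∑ i, lam i * ν (σ i) := by
  have hU' : Uᵀ * U = 1 := mul_eq_one_comm.mp hU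
  set W : Matrix (Fin d) (Fin d) ℝ := Uᵀ * V with hWdef
  have hW1 : W * Wᵀ = 1 := by
    rw [hWdef, transpose_mul, transpose_transpose, Matrix.mul_assoc,
      ← Matrix.mul_assoc V, hV, Matrix.one_mul, hU']
  have hW2 : Wᵀ * W = 1 := mul_eq_one_comm.mp hW1
  have htr : trace (U * Matrix.diagonal lam * Uᵀ * (V * Matrix.diagonal ν * Vᵀ)) =
      ∑ i, ∑ j, lam i * ν j * (W i j) ^ 2 := by
    have e1 : U * Matrix.diagonal lam * Uᵀ * (V * Matrix.diagonal ν * Vᵀ) =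
        U * (Matrix.diagonal lam * W * Matrix.diagonal ν * Vᵀ) := by
      rw [hWdef]; noncomm_ring
    rw [e1, trace_mul_comm]
    have e2 : Matrix.diagonal lam * W * Matrix.diagonal ν * Vᵀ * U =
        Matrix.diagonal lam * W * Matrix.diagonal ν * Wᵀ := by
      rw [hWdef, transpose_mul, transpose_transpose, Matrix.mul_assoc]
    rw [e2, trace]
    simp only [diag_apply, mul_apply, diagonal_apply, transpose_apply, ite_mul, zero_mul,
      mul_ite, mul_zero, Finset.sum_ite_eq, Finset.sum_ite_eq', Finset.mem_univ, if_true]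
    refine Finset.sum_congr rfl fun i _ => Finset.sum_congr rfl fun j _ => by ring
  set S : Matrix (Fin d) (Fin d) ℝ := Matrix.of fun i j => (W i j) ^ 2 with hSdef
  have hS : S ∈ doublyStochastic ℝ (Fin d) := by
    rw [mem_doublyStochastic_iff_sum]
    refine ⟨fun i j => sq_nonneg _, fun i => ?_, fun j => ?_⟩
    · simp only [hSdef, Matrix.of_apply, sq]
      have := congrFun (congrFun hW1 i) i
      simpa [mul_apply, one_apply] using this
    · simp only [hSdef, Matrix.of_apply, sq]
      have := congrFun (congrFun hW2 j) j
      simpa [mul_apply, one_apply, transpose_apply] using this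
  obtain ⟨w, hw0, hw1, hwS⟩ := exists_eq_sum_perm_of_mem_doublyStochastic hS
  set c : Equiv.Perm (Fin d) → ℝ := fun σ => ∑ i, lam i * ν (σ i) with hc
  have hlin : ∑ i, ∑ j, lam i * ν j * S i j = ∑ σ : Equiv.Perm (Fin d), w σ * c σ := by
    have step : ∀ i, (∑ j, ∑ τ : Equiv.Perm (Fin d), lam i * ν j * (w τ * τ.permMatrix ℝ i j))
        = ∑ τ : Equiv.Perm (Fin d), w τ * (lam i * ν (τ i)) := by
      intro i
      rw [Finset.sum_comm]
      refine Finset.sum_congr rfl fun τ _ => ?_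
      simp only [permMatrix_apply', mul_ite, mul_one, mul_zero, Finset.sum_ite_eq,
        Finset.mem_univ, if_true]
      ring
    rw [← hwS]
    simp only [Matrix.sum_apply, Matrix.smul_apply, smul_eq_mul, Finset.mul_sum]
    calc ∑ i, ∑ j, ∑ τ : Equiv.Perm (Fin d), lam i * ν j * (w τ * τ.permMatrix ℝ i j)
        = ∑ i, ∑ τ : Equiv.Perm (Fin d), w τ * (lam i * ν (τ i)) :=
          Finset.sum_congr rfl fun i _ => step i
      _ = ∑ τ : Equiv.Perm (Fin d), ∑ i, w τ * (lam i * ν (τ i)) := Finset.sum_comm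
      _ = ∑ τ : Equiv.Perm (Fin d), w τ * c τ := by
          refine Finset.sum_congr rfl fun τ _ => ?_
          rw [hc, Finset.mul_sum]
  obtain ⟨σ, -, hσ⟩ := Finset.exists_max_image (Finset.univ : Finset (Equiv.Perm (Fin d))) c
    ⟨1, Finset.mem_univ 1⟩
  refine ⟨σ, ?_⟩
  have hle : ∑ τ : Equiv.Perm (Fin d), w τ * c τ ≤ ∑ τ : Equiv.Perm (Fin d), w τ * c σ :=
    Finset.sum_le_sum fun τ _ => mul_le_mul_of_nonneg_left (hσ τ (Finset.mem_univ τ)) (hw0 τ)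
  rw [← Finset.sum_mul, hw1, one_mul] at hle
  calc trace (U * Matrix.diagonal lam * Uᵀ * (V * Matrix.diagonal ν * Vᵀ))
      = ∑ i, ∑ j, lam i * ν j * S i j := by
        rw [htr]; exact Finset.sum_congr rfl fun i _ => Finset.sum_congr rfl fun j _ => rfl
    _ = ∑ τ : Equiv.Perm (Fin d), w τ * c τ := hlin
    _ ≤ c σ := hle

lemma isSymm_conj (U : Matrix (Fin d) (Fin d) ℝ) (v : Fin d → ℝ) :
    (U * Matrix.diagonal v * Uᵀ).IsSymm := by
  rw [Matrix.IsSymm, transpose_mul, transpose_mul, transpose_transpose, diagonal_transpose,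
    Matrix.mul_assoc]

/-- Key inequality: distance to any spectrally decomposed symmetric matrix dominates the
eigenvalue distance for a suitable permutation. -/
lemma key_ineq (lam ν : Fin d → ℝ) (U V : Matrix (Fin d) (Fin d) ℝ)
    (hU : U * Uᵀ = 1) (hV : V * Vᵀ = 1) :
    ∃ σ : Equiv.Perm (Fin d),
      ∑ i, (lam i - ν (σ i)) ^ 2 ≤
        frobSq (U * Matrix.diagonal lam * Uᵀ - V * Matrix.diagonal ν * Vᵀ) := by
  obtain ⟨σ, hσ⟩ := trace_bound lam ν U V hU hV
  refine ⟨σ, ?_⟩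
  rw [frobSq_sub_expand _ _ (isSymm_conj V ν), frobSq_conj U _ hU, frobSq_conj V _ hV,
    frobSq_diagonal, frobSq_diagonal]
  have hνσ : ∑ i, (ν i) ^ 2 = ∑ i, (ν (σ i)) ^ 2 :=
    (Equiv.sum_comp σ fun i => (ν i) ^ 2).symm
  have expand : ∑ i, (lam i - ν (σ i)) ^ 2 =
      ∑ i, (lam i) ^ 2 + ∑ i, (ν (σ i)) ^ 2 - 2 * ∑ i, lam i * ν (σ i) := by
    rw [Finset.mul_sum, ← Finset.sum_add_distrib, ← Finset.sum_sub_distrib]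
    exact Finset.sum_congr rfl fun i _ => by ring
  rw [expand, ← hνσ]
  have := mul_le_mul_of_nonneg_left hσ (by norm_num : (0:ℝ) ≤ 2)
  linarith

end Aux

/-- for a symmetric `A = U diag(λ) Uᵀ` and a rotation-invariant,
nonempty, closed constraint set `C = {Q symmetric : F Q = 0}`, the Frobenius
projection of `A` onto `C` admits a minimizer `Q⋆ = U diag(μ) Uᵀ` simultaneously
diagonalizable with `A`, and the problem reduces to minimizing `Σᵢ (λᵢ − μᵢ)²`
over eigenvalue vectors `μ` with `F(diag μ) = 0`. -/
theorem rotation_invariant_projection {d : ℕ}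
    (F : Matrix (Fin d) (Fin d) ℝ → ℝ)
    (hFrot : ∀ R : Matrix (Fin d) (Fin d) ℝ, R * Rᵀ = 1 →
      ∀ Q : Matrix (Fin d) (Fin d) ℝ, F (R * Q * Rᵀ) = F Q)
    (A U : Matrix (Fin d) (Fin d) ℝ) (hA : A.IsSymm)
    (lam : Fin d → ℝ) (hU : U * Uᵀ = 1)
    (hdiag : A = U * Matrix.diagonal lam * Uᵀ)
    (hCne : ∃ Q : Matrix (Fin d) (Fin d) ℝ, Q.IsSymm ∧ F Q = 0)
    (hCcl : IsClosed {Q : Matrix (Fin d) (Fin d) ℝ | Q.IsSymm ∧ F Q = 0}) :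
    ∃ μ : Fin d → ℝ,
      F (Matrix.diagonal μ) = 0 ∧
      (U * Matrix.diagonal μ * Uᵀ).IsSymm ∧
      F (U * Matrix.diagonal μ * Uᵀ) = 0 ∧
      (∀ Q : Matrix (Fin d) (Fin d) ℝ, Q.IsSymm → F Q = 0 →
        frobSq (A - U * Matrix.diagonal μ * Uᵀ) ≤ frobSq (A - Q)) ∧
      frobSq (A - U * Matrix.diagonal μ * Uᵀ) = ∑ i, (lam i - μ i) ^ 2 ∧
      (∀ ν : Fin d → ℝ, F (Matrix.diagonal ν) = 0 →
        ∑ i, (lam i - μ i) ^ 2 ≤ ∑ i, (lam i - ν i) ^ 2) := by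
  classical
  -- the eigenvalue constraint set
  set D : Set (Fin d → ℝ) := {ν | F (Matrix.diagonal ν) = 0} with hD
  -- getting eigenvalues from a member of C
  have diag_mem : ∀ Q : Matrix (Fin d) (Fin d) ℝ, Q.IsSymm → F Q = 0 →
      ∃ (V : Matrix (Fin d) (Fin d) ℝ) (ν : Fin d → ℝ),
        V * Vᵀ = 1 ∧ Q = V * Matrix.diagonal ν * Vᵀ ∧ ν ∈ D := by
    intro Q hQs hQF
    obtain ⟨V, ν, hV, hQeq⟩ := exists_spectral Q hQs
    have hV' : Vᵀ * V = 1 := mul_eq_one_comm.mp hV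
    refine ⟨V, ν, hV, hQeq, ?_⟩
    have h1 : Vᵀ * Q * (Vᵀ)ᵀ = Matrix.diagonal ν := by
      rw [hQeq, transpose_transpose]
      rw [show Vᵀ * (V * Matrix.diagonal ν * Vᵀ) * V
            = (Vᵀ * V) * Matrix.diagonal ν * (Vᵀ * V) by noncomm_ring]
      rw [hV', Matrix.one_mul, Matrix.mul_one]
    have h2 : Vᵀ * (Vᵀ)ᵀ = 1 := by rwa [transpose_transpose]
    have := hFrot Vᵀ h2 Q
    rw [h1] at this
    exact this.trans hQF
  -- D is closed
  have hdiagCont : Continuous fun ν : Fin d → ℝ => Matrix.diagonal ν := by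
    apply continuous_matrix
    intro i j
    by_cases h : i = j
    · simpa [Matrix.diagonal_apply, h] using continuous_apply j
    · simpa [Matrix.diagonal_apply, h] using continuous_const
  have hDcl : IsClosed D := by
    have : D = (fun ν : Fin d → ℝ => Matrix.diagonal ν) ⁻¹'
        {Q : Matrix (Fin d) (Fin d) ℝ | Q.IsSymm ∧ F Q = 0} := by
      ext ν; simp [hD, Matrix.isSymm_diagonal]
    rw [this]
    exact hCcl.preimage hdiagCont
  -- D is nonempty
  obtain ⟨Q₀, hQ₀s, hQ₀F⟩ := hCne
  obtain ⟨V₀, ν₀, hV₀, hQ₀eq, hν₀D⟩ := diag_mem Q₀ hQ₀s hQ₀F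
  -- minimize g over D
  set g : (Fin d → ℝ) → ℝ := fun ν => ∑ i, (lam i - ν i) ^ 2 with hg
  have hgc : Continuous g := by
    apply continuous_finset_sum
    intro i _
    exact ((continuous_const.sub (continuous_apply i)).pow 2)
  have hgnn : ∀ ν, 0 ≤ g ν := fun ν => Finset.sum_nonneg fun i _ => sq_nonneg _
  have hcoer : ∀ᶠ x in Filter.cocompact (Fin d → ℝ) ⊓ Filter.principal D, g ν₀ ≤ g x := by
    apply Filter.Eventually.filter_mono inf_le_left
    rw [Filter.hasBasis_cocompact.eventually_iff]
    refine ⟨Metric.closedBall lam (Real.sqrt (g ν₀)), isCompact_closedBall _ _, ?_⟩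
    intro x hx
    simp only [Set.mem_compl_iff, Metric.mem_closedBall, not_le] at hx
    by_contra hcon
    push_neg at hcon
    have hxd : dist x lam ≤ Real.sqrt (g x) := by
      rw [dist_pi_le_iff (Real.sqrt_nonneg _)]
      intro i
      have h1 : (lam i - x i) ^ 2 ≤ g x :=
        Finset.single_le_sum (fun j _ => sq_nonneg ((lam j - x j))) (Finset.mem_univ i)
      have : dist (x i) (lam i) = Real.sqrt ((lam i - x i) ^ 2) := by
        rw [Real.sqrt_sq_eq_abs, Real.dist_eq, abs_sub_comm]
      rw [this]
      exact Real.sqrt_le_sqrt h1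
    have : Real.sqrt (g x) ≤ Real.sqrt (g ν₀) := Real.sqrt_le_sqrt hcon.le
    linarith [hx.trans_le hxd]
  obtain ⟨μ, hμD, hμmin⟩ :=
    hgc.continuousOn.exists_isMinOn' hDcl hν₀D hcoer
  have hμmin' : ∀ ν ∈ D, g μ ≤ g ν := fun ν hν => hμmin hν
  -- conclusion 5 : frobSq value
  have hval : frobSq (A - U * Matrix.diagonal μ * Uᵀ) = ∑ i, (lam i - μ i) ^ 2 := by
    have e : A - U * Matrix.diagonal μ * Uᵀ
        = U * Matrix.diagonal (fun i => lam i - μ i) * Uᵀ := by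
      rw [hdiag]
      rw [show (Matrix.diagonal fun i => lam i - μ i)
            = Matrix.diagonal lam - Matrix.diagonal μ from (Matrix.diagonal_sub _ _).symm]
      rw [Matrix.mul_sub, Matrix.sub_mul]
    rw [e, frobSq_conj U _ hU, frobSq_diagonal]
  refine ⟨μ, hμD, isSymm_conj U μ, ?_, ?_, hval, ?_⟩
  · have := hFrot U hU (Matrix.diagonal μ)
    rw [this]; exact hμD
  · -- global minimality over C
    intro Q hQs hQF
    obtain ⟨V, ν, hV, hQeq, hνD⟩ := diag_mem Q hQs hQF
    obtain ⟨σ, hσ⟩ := key_ineq lam ν U V hU hV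
    have hperm : (ν ∘ σ) ∈ D := by
      have h1 := hFrot (σ.permMatrix ℝ) (permMatrix_orth σ) (Matrix.diagonal ν)
      have h2 : F (Matrix.diagonal (ν ∘ σ)) = F (Matrix.diagonal ν) := by
        rw [diagonal_perm]; exact h1
      simpa [hD, h2] using hνD
    have hchain : g μ ≤ ∑ i, (lam i - ν (σ i)) ^ 2 := by
      have := hμmin' (ν ∘ σ) hperm
      simpa [hg, Function.comp] using this
    rw [← hdiag, ← hQeq] at hσ
    calc frobSq (A - U * Matrix.diagonal μ * Uᵀ) = g μ := hval
      _ ≤ ∑ i, (lam i - ν (σ i)) ^ 2 := hchain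
      _ ≤ frobSq (A - Q) := hσ
  · intro ν hν
    exact hμmin' ν hν
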